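/- arXiv:1805.05173 — 3 statements merged into one kernel-verified Lean document; each statement's English description precedes it below -/
import Mathlib

section
/- For θ ∈ (0, π/2) and any point (x,y) with |x| < (π/2)secθ and y ≠ 0, the function u(x,y) = -sec²θ·log(cos(x/secθ)) + tan²θ·log(cosh(|y|/tanθ)) satisfies (1+|Du|²)^{3/2}·H[u] ≥ 1 + |Du|², where H[u] = div(Du/√(1+|Du|²)); in particular H[u] ≥ 1/√(1+|Du|²), i.e. u is a subsolution of the graphical translator equation. -/
open Real
open scoped RealInnerProductSpace

/-- The Euclidean divergence of a vector field `F` at `p`: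
`div F (p) = ∑ i ⟨∂F/∂eᵢ (p), eᵢ⟩`. -/
noncomputable def eDiv {m : ℕ} (F : EuclideanSpace ℝ (Fin m) → EuclideanSpace ℝ (Fin m))
    (p : EuclideanSpace ℝ (Fin m)) : ℝ :=
  ∑ i : Fin m, ⟪fderiv ℝ F p (EuclideanSpace.single i 1), EuclideanSpace.single i 1⟫

/- ### Auxiliary definitions and lemmas -/

/-- Square of the norm of the coordinates other than coordinate `0`. -/
noncomputable def rho2 {n : ℕ} (q : EuclideanSpace ℝ (Fin n)) : ℝ :=
  ∑ i : Fin n, if (i : ℕ) = 0 then 0 else q i ^ 2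

/-- The derivative of `rho2`. -/
noncomputable def Lmap {n : ℕ} (q : EuclideanSpace ℝ (Fin n)) :
    EuclideanSpace ℝ (Fin n) →L[ℝ] ℝ :=
  ∑ i : Fin n, if (i : ℕ) = 0 then 0 else (2 * q i) • (EuclideanSpace.proj i : EuclideanSpace ℝ (Fin n) →L[ℝ] ℝ)

lemma hasFDerivAt_coord {n : ℕ} (i : Fin n) (q : EuclideanSpace ℝ (Fin n)) :
    HasFDerivAt (fun q' : EuclideanSpace ℝ (Fin n) => q' i)
      (EuclideanSpace.proj i : EuclideanSpace ℝ (Fin n) →L[ℝ] ℝ) q :=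
  (EuclideanSpace.proj (𝕜 := ℝ) i).hasFDerivAt.congr_of_eventuallyEq
    (Filter.Eventually.of_forall fun _ => rfl)

lemma hasFDerivAt_rho2 {n : ℕ} (q : EuclideanSpace ℝ (Fin n)) :
    HasFDerivAt rho2 (Lmap q) q := by
  have : HasFDerivAt (fun q' : EuclideanSpace ℝ (Fin n) =>
      ∑ i : Fin n, (if (i : ℕ) = 0 then 0 else q' i ^ 2))
      (∑ i : Fin n, if (i : ℕ) = 0 then 0 else (2 * q i) • (EuclideanSpace.proj i : EuclideanSpace ℝ (Fin n) →L[ℝ] ℝ)) q := by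
    apply HasFDerivAt.fun_sum
    intro i _
    by_cases h : (i : ℕ) = 0
    · simpa [h] using hasFDerivAt_const (0 : ℝ) q
    · simp only [if_neg h]
      have h1 : HasFDerivAt (fun q' : EuclideanSpace ℝ (Fin n) => q' i)
          (EuclideanSpace.proj i : EuclideanSpace ℝ (Fin n) →L[ℝ] ℝ) q := hasFDerivAt_coord i q
      have h2 := h1.mul h1
      simp only [pow_two, two_mul, add_smul]
      exact h2
  exact this

lemma Lmap_apply {n : ℕ} (q v : EuclideanSpace ℝ (Fin n)) :
    Lmap q v = ∑ i : Fin n, if (i : ℕ) = 0 then 0 else 2 * q i * v i := by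
  unfold Lmap
  rw [ContinuousLinearMap.sum_apply]
  refine Finset.sum_congr rfl fun i _ => ?_
  by_cases h : (i : ℕ) = 0 <;> simp [h, mul_assoc]

lemma Lmap_single {n : ℕ} (q : EuclideanSpace ℝ (Fin n)) (j : Fin n) :
    Lmap q (EuclideanSpace.single j 1) = if (j : ℕ) = 0 then 0 else 2 * q j := by
  rw [Lmap_apply]
  rw [Finset.sum_eq_single j]
  · by_cases h : (j : ℕ) = 0 <;> simp [h]
  · intro i _ hij
    by_cases h : (i : ℕ) = 0 <;> simp [h, EuclideanSpace.single_apply, hij]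
  · simp

lemma sum_ite_zero_eq {n : ℕ} (i0 : Fin n) (h0 : (i0 : ℕ) = 0) (f : Fin n → ℝ) :
    ∑ i : Fin n, (if (i : ℕ) = 0 then 0 else f i) = (∑ i : Fin n, f i) - f i0 := by
  have h : ∀ i : Fin n, (if (i : ℕ) = 0 then (0:ℝ) else f i)
      = f i - (if i = i0 then f i else 0) := by
    intro i
    by_cases h : i = i0
    · subst h; simp [h0]
    · rw [if_neg h, if_neg (by simp [Fin.ext_iff, h0] at h ⊢; exact h)]; ring
  rw [Finset.sum_congr rfl fun i _ => h i, Finset.sum_sub_distrib,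
    Finset.sum_ite_eq' Finset.univ i0 f]
  simp

/- scalar calculus lemmas -/

lemma hasDerivAt_A (cθ : ℝ) (hc : 0 < cθ) (x : ℝ) (h : 0 < Real.cos (x * cθ)) :
    HasDerivAt (fun x' => -(1/cθ)^2 * Real.log (Real.cos (x' * cθ)))
      ((1/cθ) * Real.tan (x * cθ)) x := by
  have h1 : HasDerivAt (fun x' : ℝ => x' * cθ) cθ x := by
    simpa using (hasDerivAt_id x).mul_const cθ
  have h2 : HasDerivAt (fun x' : ℝ => Real.cos (x' * cθ)) (-Real.sin (x*cθ) * cθ) x :=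
    by have := (Real.hasDerivAt_cos (x*cθ)).comp x h1; exact this
  have h3 := (Real.hasDerivAt_log h.ne').comp x h2
  have h4 := h3.const_mul (-(1/cθ)^2)
  refine h4.congr_deriv (Eq.symm ?_)
  rw [Real.tan_eq_sin_div_cos]
  field_simp

lemma hasDerivAt_a (cθ : ℝ) (hc : 0 < cθ) (x : ℝ) (h : 0 < Real.cos (x * cθ)) :
    HasDerivAt (fun x' => (1/cθ) * Real.tan (x' * cθ)) (1 / Real.cos (x * cθ) ^ 2) x := by
  have h1 : HasDerivAt (fun x' : ℝ => x' * cθ) cθ x := by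
    simpa using (hasDerivAt_id x).mul_const cθ
  have h2 := ((Real.hasDerivAt_tan h.ne').comp x h1).const_mul (1/cθ)
  refine h2.congr_deriv (Eq.symm ?_)
  field_simp

lemma hasDerivAt_B (tθ : ℝ) (ht : 0 < tθ) (t : ℝ) (h : 0 < t) :
    HasDerivAt (fun t' => tθ^2 * Real.log (Real.cosh (Real.sqrt t' / tθ)))
      (tθ * (Real.sinh (Real.sqrt t / tθ) / Real.cosh (Real.sqrt t / tθ)) / Real.sqrt t / 2) t := by
  have hr : 0 < Real.sqrt t := Real.sqrt_pos.2 h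
  have h1 : HasDerivAt (fun t' : ℝ => Real.sqrt t' / tθ) (1/(2*Real.sqrt t)/tθ) t :=
    (Real.hasDerivAt_sqrt h.ne').div_const tθ
  have h2 := (Real.hasDerivAt_cosh _).comp t h1
  have h3 := (Real.hasDerivAt_log (x := Real.cosh (Real.sqrt t / tθ)) (Real.cosh_pos _).ne').comp t h2
  have h4 := h3.const_mul (tθ^2)
  refine h4.congr_deriv (Eq.symm ?_)
  field_simp

lemma hasDerivAt_om (tθ : ℝ) (ht : 0 < tθ) (t : ℝ) (h : 0 < t) :
    HasDerivAt (fun s => tθ * (Real.sinh (Real.sqrt s / tθ) / Real.cosh (Real.sqrt s / tθ)) / Real.sqrt s)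
      ((Real.cosh (Real.sqrt t / tθ)^2 - Real.sinh (Real.sqrt t / tθ)^2)
          / (2 * (Real.sqrt t * Real.sqrt t) * Real.cosh (Real.sqrt t / tθ)^2)
        - tθ * Real.sinh (Real.sqrt t / tθ)
          / (2 * (Real.sqrt t * Real.sqrt t * Real.sqrt t) * Real.cosh (Real.sqrt t / tθ))) t := by
  have hr : 0 < Real.sqrt t := Real.sqrt_pos.2 h
  have hch : 0 < Real.cosh (Real.sqrt t / tθ) := Real.cosh_pos _
  have h1 : HasDerivAt (fun t' : ℝ => Real.sqrt t' / tθ) (1/(2*Real.sqrt t)/tθ) t :=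
    (Real.hasDerivAt_sqrt h.ne').div_const tθ
  have hsh := (Real.hasDerivAt_sinh _).comp t h1
  have hch' := (Real.hasDerivAt_cosh _).comp t h1
  have hq := (hsh.div hch' hch.ne').const_mul tθ
  have h2 := hq.div (Real.hasDerivAt_sqrt h.ne') hr.ne'
  have hid := Real.cosh_sq_sub_sinh_sq (Real.sqrt t * tθ⁻¹)
  refine h2.congr_deriv (Eq.symm ?_)
  simp only [Function.comp_apply, Pi.div_apply]
  field_simp

lemma hasDerivAt_beta (tθ : ℝ) (ht : 0 < tθ) (t : ℝ) (h : 0 < t) :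
    HasDerivAt (fun s => tθ^2 * Real.sinh (Real.sqrt s / tθ)^2 / Real.cosh (Real.sqrt s / tθ)^2)
      (tθ * Real.sinh (Real.sqrt t / tθ)
          * (Real.cosh (Real.sqrt t / tθ)^2 - Real.sinh (Real.sqrt t / tθ)^2)
          / (Real.sqrt t * Real.cosh (Real.sqrt t / tθ)^3)) t := by
  have hr : 0 < Real.sqrt t := Real.sqrt_pos.2 h
  have hch : 0 < Real.cosh (Real.sqrt t / tθ) := Real.cosh_pos _
  have h1 : HasDerivAt (fun t' : ℝ => Real.sqrt t' / tθ) (1/(2*Real.sqrt t)/tθ) t :=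
    (Real.hasDerivAt_sqrt h.ne').div_const tθ
  have hsh := (Real.hasDerivAt_sinh _).comp t h1
  have hch' := (Real.hasDerivAt_cosh _).comp t h1
  have hnum := (hsh.pow 2).const_mul (tθ^2)
  have h2 := hnum.div (hch'.pow 2) (pow_ne_zero 2 hch.ne')
  have hid := Real.cosh_sq_sub_sinh_sq (Real.sqrt t * tθ⁻¹)
  refine h2.congr_deriv (Eq.symm ?_)
  simp only [Function.comp_apply, Pi.pow_apply]
  field_simp
  push_cast
  ring


/-- First-coordinate slope function. -/
noncomputable def aQ (cθ x : ℝ) : ℝ := (1/cθ) * Real.tan (x * cθ)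

/-- Radial slope over radius, as a function of the squared radius. -/
noncomputable def omg (tθ s : ℝ) : ℝ :=
  tθ * (Real.sinh (Real.sqrt s / tθ) / Real.cosh (Real.sqrt s / tθ)) / Real.sqrt s

/-- Square of radial slope, as a function of the squared radius. -/
noncomputable def btf (tθ s : ℝ) : ℝ :=
  tθ^2 * Real.sinh (Real.sqrt s / tθ)^2 / Real.cosh (Real.sqrt s / tθ)^2

/-- The gradient vector field. -/
noncomputable def Gvec {n : ℕ} (cθ tθ : ℝ) (i0 : Fin n) (q : EuclideanSpace ℝ (Fin n)) :
    EuclideanSpace ℝ (Fin n) :=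
  aQ cθ (q i0) • EuclideanSpace.single i0 1 + omg tθ (rho2 q) • (q - q i0 • EuclideanSpace.single i0 1)

lemma omg_sq {tθ : ℝ} (ht : 0 < tθ) {s : ℝ} (hs : 0 < s) : (omg tθ s)^2 * s = btf tθ s := by
  unfold omg btf
  set w := Real.sqrt s with hw
  have hw0 : 0 < w := Real.sqrt_pos.2 hs
  have hss : w * w = s := Real.mul_self_sqrt hs.le
  rw [← hss]
  have hch : Real.cosh (w / tθ) ≠ 0 := (Real.cosh_pos _).ne'
  field_simp

lemma inner_eq_sum {n : ℕ} (x y : EuclideanSpace ℝ (Fin n)) : ⟪x, y⟫ = ∑ i, x i * y i := by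
  simp [PiLp.inner_apply, RCLike.inner_apply]
  exact Finset.sum_congr rfl fun i _ => mul_comm _ _

lemma grad_formula {n : ℕ} (i0 : Fin n) (h0 : (i0 : ℕ) = 0) (cθ tθ : ℝ)
    (hc : 0 < cθ) (ht : 0 < tθ) (q : EuclideanSpace ℝ (Fin n))
    (h1 : 0 < Real.cos (q i0 * cθ)) (h2 : 0 < rho2 q) :
    HasGradientAt (fun q' : EuclideanSpace ℝ (Fin n) =>
        -(1/cθ)^2 * Real.log (Real.cos (q' i0 * cθ))
          + tθ^2 * Real.log (Real.cosh (Real.sqrt (rho2 q') / tθ)))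
      (Gvec cθ tθ i0 q) q := by
  have hA : HasFDerivAt (fun q' : EuclideanSpace ℝ (Fin n) =>
      -(1/cθ)^2 * Real.log (Real.cos (q' i0 * cθ)))
      (aQ cθ (q i0) • (EuclideanSpace.proj i0 : EuclideanSpace ℝ (Fin n) →L[ℝ] ℝ)) q :=
    by have := (hasDerivAt_A cθ hc (q i0) h1).comp_hasFDerivAt q (hasFDerivAt_coord i0 q); exact this
  have hB : HasFDerivAt (fun q' : EuclideanSpace ℝ (Fin n) =>
      tθ^2 * Real.log (Real.cosh (Real.sqrt (rho2 q') / tθ)))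
      ((omg tθ (rho2 q) / 2) • Lmap q) q :=
    (hasDerivAt_B tθ ht (rho2 q) h2).comp_hasFDerivAt q (hasFDerivAt_rho2 q)
  have hD := hA.add hB
  rw [hasGradientAt_iff_hasFDerivAt]
  refine hD.congr_fderiv (Eq.symm ?_)
  apply ContinuousLinearMap.ext
  intro v
  have hsum2 : ∑ i : Fin n, 2 * q i * v i = 2 * ∑ i : Fin n, q i * v i := by
    rw [Finset.mul_sum]; exact Finset.sum_congr rfl fun i _ => by ring
  rw [InnerProductSpace.toDual_apply_apply]
  unfold Gvec
  rw [inner_add_left, real_inner_smul_left, real_inner_smul_left, inner_sub_left,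
    real_inner_smul_left, EuclideanSpace.inner_single_left, inner_eq_sum]
  simp only [ContinuousLinearMap.add_apply, ContinuousLinearMap.smul_apply, smul_eq_mul,
    Lmap_apply, sum_ite_zero_eq i0 h0, hsum2, starRingEnd_apply, star_one, one_mul]
  have hproj : (EuclideanSpace.proj i0 : EuclideanSpace ℝ (Fin n) →L[ℝ] ℝ) v = v i0 := rfl
  rw [hproj]
  ring

lemma norm_formula {n : ℕ} (i0 : Fin n) (h0 : (i0 : ℕ) = 0) (cθ tθ : ℝ)
    (ht : 0 < tθ) (q : EuclideanSpace ℝ (Fin n)) (h2 : 0 < rho2 q) :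
    ‖Gvec cθ tθ i0 q‖^2 = aQ cθ (q i0)^2 + btf tθ (rho2 q) := by
  rw [← real_inner_self_eq_norm_sq]
  unfold Gvec
  rw [real_inner_add_add_self]
  have he0 : ⟪(EuclideanSpace.single i0 (1:ℝ)), (EuclideanSpace.single i0 (1:ℝ))⟫ = 1 := by
    rw [EuclideanSpace.inner_single_left]; simp
  have heq : ⟪q, (EuclideanSpace.single i0 (1:ℝ))⟫ = q i0 := by
    rw [EuclideanSpace.inner_single_right]; simp
  have hsq : ⟪q, q⟫ = ∑ i, q i * q i := inner_eq_sum q q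
  have hrho : rho2 q = (∑ i, q i * q i) - q i0 * q i0 := by
    unfold rho2
    rw [sum_ite_zero_eq i0 h0 (fun i => q i ^ 2)]
    simp only [pow_two]
  have heq' : ⟪(EuclideanSpace.single i0 (1:ℝ)), q⟫ = q i0 := by
    rw [real_inner_comm]; exact heq
  simp only [real_inner_smul_left, real_inner_smul_right, inner_sub_left, inner_sub_right,
    he0, heq, heq', hsq]
  have h3 := omg_sq ht h2
  linear_combination h3 - (omg tθ (rho2 q))^2 * hrho


@[simp] lemma proj_apply' {n : ℕ} (i : Fin n) (v : EuclideanSpace ℝ (Fin n)) :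
    (EuclideanSpace.proj i : EuclideanSpace ℝ (Fin n) →L[ℝ] ℝ) v = v i := rfl

lemma inner_single_one {n : ℕ} (v : EuclideanSpace ℝ (Fin n)) (j : Fin n) :
    ⟪v, EuclideanSpace.single j (1:ℝ)⟫ = v j := by
  rw [EuclideanSpace.inner_single_right]; simp

lemma rho2_eq {n : ℕ} (i0 : Fin n) (h0 : (i0 : ℕ) = 0) (q : EuclideanSpace ℝ (Fin n)) :
    rho2 q = (∑ i, q i * q i) - q i0 * q i0 := by
  unfold rho2
  rw [sum_ite_zero_eq i0 h0 (fun i => q i ^ 2)]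
  simp only [pow_two]

set_option maxHeartbeats 2000000 in

lemma final_ineq (n : ℕ) (hn2 : 2 ≤ n) (cθ tθ c0 a0 t r sh ch omt btv omP btP SQ : ℝ)
    (htθ : 0 < tθ) (hc0 : 0 < c0) (hr : 0 < r) (hsh : 0 < sh) (hch : 0 < ch)
    (hrr : r * r = t) (hid : ch^2 - sh^2 = 1) (hrel : tθ^2*cθ^2 = 1 - cθ^2)
    (hs : 1/c0^2 = 1 + a0^2*cθ^2)
    (homt : omt = tθ * (sh/ch) / r)
    (hbtv : btv = tθ^2*sh^2/ch^2)
    (homP : omP = (ch^2 - sh^2)/(2*(r*r)*ch^2) - tθ*sh/(2*(r*r*r)*ch))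
    (hbtP : btP = tθ*sh*(ch^2-sh^2)/(r*ch^3))
    (hSQ : SQ = Real.sqrt (1 + (a0^2 + btv))) :
    SQ⁻¹ ≤ (SQ⁻¹ * (1/c0^2) + -(1/(2*SQ))/SQ^2 * (2*a0*(1/c0^2)) * a0)
      + (((n:ℝ) - 1) * (SQ⁻¹ * omt)
        + (SQ⁻¹ * (omP*2) + -(1/(2*SQ))/SQ^2 * (btP*2) * omt) * t) := by
  subst homt hbtP homP hbtv hSQ
  subst hrr
  rw [hid]
  have hn2' : (2:ℝ) ≤ (n:ℝ) := by exact_mod_cast hn2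
  have hQpos : 0 < 1 + (a0^2 + tθ^2*sh^2/ch^2) := by positivity
  have hSQpos : 0 < Real.sqrt (1 + (a0^2 + tθ^2*sh^2/ch^2)) := Real.sqrt_pos.2 hQpos
  set S := Real.sqrt (1 + (a0^2 + tθ^2*sh^2/ch^2)) with hSdef
  have hSQ2 : S^2 = 1 + (a0^2 + tθ^2*sh^2/ch^2) := Real.sq_sqrt hQpos.le
  rw [← sub_nonneg]
  have hnum : 0 ≤ S^2*((1/c0^2) + ((n:ℝ)-1)*(tθ*(sh/ch)/r)
        + (1/(2*(r*r)*ch^2) - tθ*sh/(2*(r*r*r)*ch))*(2*(r*r)))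
      - (a0^2*(1/c0^2) + (tθ*sh*1/(r*ch^3))*(tθ*(sh/ch)/r)*(r*r)) - S^2 := by
    rw [hSQ2]
    have e1 : (1/(2*(r*r)*ch^2) - tθ*sh/(2*(r*r*r)*ch))*(2*(r*r))
        = 1/ch^2 - tθ*(sh/ch)/r := by field_simp
    have e2 : (tθ*sh*1/(r*ch^3))*(tθ*(sh/ch)/r)*(r*r) = tθ^2*sh^2/ch^4 := by
      field_simp
    rw [e1, e2]
    have hkey : (1 + (a0^2 + tθ^2*sh^2/ch^2))*((1/c0^2) + ((n:ℝ)-1)*(tθ*(sh/ch)/r)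
          + (1/ch^2 - tθ*(sh/ch)/r))
        - (a0^2*(1/c0^2) + tθ^2*sh^2/ch^4) - (1 + (a0^2 + tθ^2*sh^2/ch^2))
        = (1/c0^2)*(1/ch^2)
          + ((n:ℝ)-2)*((1 + (a0^2 + tθ^2*sh^2/ch^2))*(tθ*(sh/ch)/r)) := by
      rw [hs]
      have hu : ch * ch⁻¹ = 1 := mul_inv_cancel₀ hch.ne'
      linear_combination (a0^2*(1 - 1/ch^2))*hrel - (a0^2*tθ^2*cθ^2/ch^2)*hid
        + (a0^2*tθ^2*cθ^2*(ch*ch⁻¹+1))*hu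
    have hmargin : 0 ≤ (1/c0^2)*(1/ch^2)
        + ((n:ℝ)-2)*((1 + (a0^2 + tθ^2*sh^2/ch^2))*(tθ*(sh/ch)/r)) := by
      have h1 : 0 ≤ ((n:ℝ)-2) := by linarith
      have h2 : 0 ≤ (1 + (a0^2 + tθ^2*sh^2/ch^2))*(tθ*(sh/ch)/r) := by positivity
      have h3 : 0 < (1/c0^2)*(1/ch^2) := by positivity
      nlinarith [mul_nonneg h1 h2]
    refine le_trans hmargin (le_of_eq ?_)
    rw [← hkey]
  have hS3 : (0:ℝ) < S^3 := by positivity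
  have hexp : ((S⁻¹ * (1/c0^2) + -(1/(2*S))/S^2 * (2*a0*(1/c0^2)) * a0)
      + (((n:ℝ) - 1) * (S⁻¹ * (tθ * (sh/ch) / r))
        + (S⁻¹ * ((1/(2*(r*r)*ch^2) - tθ*sh/(2*(r*r*r)*ch))*2)
          + -(1/(2*S))/S^2 * (tθ*sh*1/(r*ch^3)*2) * (tθ * (sh/ch) / r)) * (r*r))) - S⁻¹
      = (S^2*((1/c0^2) + ((n:ℝ)-1)*(tθ*(sh/ch)/r)
        + (1/(2*(r*r)*ch^2) - tθ*sh/(2*(r*r*r)*ch))*(2*(r*r)))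
      - (a0^2*(1/c0^2) + (tθ*sh*1/(r*ch^3))*(tθ*(sh/ch)/r)*(r*r)) - S^2) / S^3 := by
    field_simp
    ring
  rw [hexp]
  exact div_nonneg hnum hS3.le

set_option maxHeartbeats 4000000 in
/-- for θ ∈ (0,π/2) and any point (x,y) with |x| < (π/2)secθ and y ≠ 0, the
function `u(x,y) = -sec²θ·log(cos(x/secθ)) + tan²θ·log(cosh(|y|/tanθ))` satisfies
`H[u] ≥ 1/√(1+|Du|²)` where `H[u] = div(Du/√(1+|Du|²))`; i.e. `u` is a subsolution of the
graphical translator equation. (Here `x/secθ = x·cosθ`, the first coordinate is `p 0`, and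
`|y|` is the norm of the remaining coordinates.) -/
theorem grim_oval_subsolution (n : ℕ) (hn : 2 ≤ n) (θ : ℝ)
    (hθ : θ ∈ Set.Ioo 0 (Real.pi / 2))
    (u : EuclideanSpace ℝ (Fin n) → ℝ)
    (hu : ∀ p : EuclideanSpace ℝ (Fin n),
      u p = -(1 / Real.cos θ) ^ 2 * Real.log (Real.cos (p ⟨0, by omega⟩ * Real.cos θ))
        + (Real.tan θ) ^ 2 * Real.log (Real.cosh
            (Real.sqrt (∑ i : Fin n, if (i : ℕ) = 0 then 0 else (p i) ^ 2) / Real.tan θ)))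
    (p : EuclideanSpace ℝ (Fin n))
    (hp : |p ⟨0, by omega⟩| < (Real.pi / 2) * (1 / Real.cos θ))
    (hy : ∃ i : Fin n, (i : ℕ) ≠ 0 ∧ p i ≠ 0) :
    eDiv (fun q => (Real.sqrt (1 + ‖gradient u q‖ ^ 2))⁻¹ • gradient u q) p
      ≥ (Real.sqrt (1 + ‖gradient u p‖ ^ 2))⁻¹ := by
  classical
  obtain ⟨hθ0, hθ2⟩ := hθ
  have hπ := Real.pi_pos
  have hn0 : 0 < n := by omega
  set i0 : Fin n := ⟨0, hn0⟩ with hi0def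
  have h0 : (i0 : ℕ) = 0 := rfl
  set cθ := Real.cos θ with hcθdef
  set tθ := Real.tan θ with htθdef
  have hcθ : 0 < cθ := Real.cos_pos_of_mem_Ioo ⟨by linarith, hθ2⟩
  have htθ : 0 < tθ := Real.tan_pos_of_pos_of_lt_pi_div_two hθ0 hθ2
  have hufun : u = fun q => -(1/cθ)^2 * Real.log (Real.cos (q i0 * cθ))
      + tθ^2 * Real.log (Real.cosh (Real.sqrt (rho2 q) / tθ)) := by
    funext q; rw [hu q]; rfl
  have hx0 : |p i0 * cθ| < Real.pi/2 := by
    rw [abs_mul, abs_of_pos hcθ]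
    have h1 : |p i0| < Real.pi/2 * (1/cθ) := hp
    calc |p i0| * cθ < (Real.pi/2 * (1/cθ)) * cθ := mul_lt_mul_of_pos_right h1 hcθ
      _ = Real.pi/2 := by field_simp
  have hc0 : 0 < Real.cos (p i0 * cθ) :=
    Real.cos_pos_of_mem_Ioo ⟨by linarith [(abs_lt.1 hx0).1], (abs_lt.1 hx0).2⟩
  have hrt0 : 0 < rho2 p := by
    obtain ⟨i, hi, hpi⟩ := hy
    have h1 : (0:ℝ) < if (i:ℕ) = 0 then 0 else p i ^ 2 := by
      rw [if_neg hi]; positivity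
    refine lt_of_lt_of_le h1 ?_
    exact Finset.single_le_sum (f := fun j : Fin n => if (j:ℕ) = 0 then (0:ℝ) else p j ^ 2)
      (fun j _ => by dsimp only; split <;> positivity) (Finset.mem_univ i)
  -- continuity and eventual equality
  have hcont0 : Continuous fun q : EuclideanSpace ℝ (Fin n) => q i0 :=
    continuous_iff_continuousAt.2 fun q => (hasFDerivAt_coord i0 q).continuousAt
  have hcontr : Continuous fun q : EuclideanSpace ℝ (Fin n) => rho2 q :=
    continuous_iff_continuousAt.2 fun q => (hasFDerivAt_rho2 q).continuousAt
  have hev : ∀ᶠ q in nhds p, 0 < Real.cos (q i0 * cθ) ∧ 0 < rho2 q := by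
    have ho : IsOpen {q : EuclideanSpace ℝ (Fin n) | 0 < Real.cos (q i0 * cθ) ∧ 0 < rho2 q} :=
      (isOpen_lt continuous_const (Real.continuous_cos.comp (hcont0.mul continuous_const))).and
        (isOpen_lt continuous_const hcontr)
    exact Filter.eventually_of_mem (ho.mem_nhds ⟨hc0, hrt0⟩) fun q hq => hq
  have hgradq : ∀ q, 0 < Real.cos (q i0 * cθ) → 0 < rho2 q →
      gradient u q = Gvec cθ tθ i0 q := by
    intro q hq1 hq2
    rw [hufun]
    exact (grad_formula i0 h0 cθ tθ hcθ htθ q hq1 hq2).gradient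
  have hFeq : (fun q => (Real.sqrt (1 + ‖gradient u q‖^2))⁻¹ • gradient u q)
      =ᶠ[nhds p] (fun q =>
        (Real.sqrt (1 + (aQ cθ (q i0)^2 + btf tθ (rho2 q))))⁻¹ • Gvec cθ tθ i0 q) := by
    filter_upwards [hev] with q hq
    rw [hgradq q hq.1 hq.2, norm_formula i0 h0 cθ tθ htθ q hq.2]
  -- derivative construction
  have hDa : HasFDerivAt (fun q : EuclideanSpace ℝ (Fin n) => aQ cθ (q i0))
      ((1 / Real.cos (p i0 * cθ)^2) •
        (EuclideanSpace.proj i0 : EuclideanSpace ℝ (Fin n) →L[ℝ] ℝ)) p :=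
    by have := (hasDerivAt_a cθ hcθ (p i0) hc0).comp_hasFDerivAt p (hasFDerivAt_coord i0 p); exact this
  have hDom : HasFDerivAt (fun q : EuclideanSpace ℝ (Fin n) => omg tθ (rho2 q))
      (((Real.cosh (Real.sqrt (rho2 p) / tθ)^2 - Real.sinh (Real.sqrt (rho2 p) / tθ)^2)
          / (2 * (Real.sqrt (rho2 p) * Real.sqrt (rho2 p)) * Real.cosh (Real.sqrt (rho2 p) / tθ)^2)
        - tθ * Real.sinh (Real.sqrt (rho2 p) / tθ)
          / (2 * (Real.sqrt (rho2 p) * Real.sqrt (rho2 p) * Real.sqrt (rho2 p))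
              * Real.cosh (Real.sqrt (rho2 p) / tθ))) • Lmap p) p :=
    (hasDerivAt_om tθ htθ (rho2 p) hrt0).comp_hasFDerivAt p (hasFDerivAt_rho2 p)
  have hDbt : HasFDerivAt (fun q : EuclideanSpace ℝ (Fin n) => btf tθ (rho2 q))
      ((tθ * Real.sinh (Real.sqrt (rho2 p) / tθ)
          * (Real.cosh (Real.sqrt (rho2 p) / tθ)^2 - Real.sinh (Real.sqrt (rho2 p) / tθ)^2)
          / (Real.sqrt (rho2 p) * Real.cosh (Real.sqrt (rho2 p) / tθ)^3)) • Lmap p) p :=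
    (hasDerivAt_beta tθ htθ (rho2 p) hrt0).comp_hasFDerivAt p (hasFDerivAt_rho2 p)
  have hQ1 : HasFDerivAt (fun q : EuclideanSpace ℝ (Fin n) => aQ cθ (q i0)^2)
      ((2 * aQ cθ (p i0)) • ((1 / Real.cos (p i0 * cθ)^2) •
        (EuclideanSpace.proj i0 : EuclideanSpace ℝ (Fin n) →L[ℝ] ℝ))) p := by
    have h := hDa.mul hDa
    have h2 : (fun q : EuclideanSpace ℝ (Fin n) => aQ cθ (q i0)^2)
        = fun q => aQ cθ (q i0) * aQ cθ (q i0) := by funext q; ring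
    rw [h2, two_mul, add_smul]
    exact h
  have hQv0 : 0 < 1 + (aQ cθ (p i0)^2 + btf tθ (rho2 p)) := by
    have h1 : 0 ≤ btf tθ (rho2 p) := by unfold btf; positivity
    nlinarith [sq_nonneg (aQ cθ (p i0))]
  have hSQ0 : 0 < Real.sqrt (1 + (aQ cθ (p i0)^2 + btf tθ (rho2 p))) := Real.sqrt_pos.2 hQv0
  have hQ : HasFDerivAt (fun q : EuclideanSpace ℝ (Fin n) =>
      1 + (aQ cθ (q i0)^2 + btf tθ (rho2 q)))
      ((2 * aQ cθ (p i0)) • ((1 / Real.cos (p i0 * cθ)^2) •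
        (EuclideanSpace.proj i0 : EuclideanSpace ℝ (Fin n) →L[ℝ] ℝ))
        + (tθ * Real.sinh (Real.sqrt (rho2 p) / tθ)
          * (Real.cosh (Real.sqrt (rho2 p) / tθ)^2 - Real.sinh (Real.sqrt (rho2 p) / tθ)^2)
          / (Real.sqrt (rho2 p) * Real.cosh (Real.sqrt (rho2 p) / tθ)^3)) • Lmap p) p := by
    have h := (hQ1.add hDbt).const_add 1
    exact h
  have hinv : HasDerivAt (fun y : ℝ => (Real.sqrt y)⁻¹)
      (-(1/(2*Real.sqrt (1 + (aQ cθ (p i0)^2 + btf tθ (rho2 p)))))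
        / Real.sqrt (1 + (aQ cθ (p i0)^2 + btf tθ (rho2 p)))^2)
      (1 + (aQ cθ (p i0)^2 + btf tθ (rho2 p))) :=
    (Real.hasDerivAt_sqrt hQv0.ne').inv hSQ0.ne'
  have hψ := hinv.comp_hasFDerivAt p hQ
  have hGv1 := hDa.smul_const (EuclideanSpace.single i0 (1:ℝ))
  have hP : HasFDerivAt (fun q : EuclideanSpace ℝ (Fin n) =>
        q - q i0 • EuclideanSpace.single i0 (1:ℝ))
      (ContinuousLinearMap.id ℝ (EuclideanSpace ℝ (Fin n))
        - (EuclideanSpace.proj i0 : EuclideanSpace ℝ (Fin n) →L[ℝ] ℝ).smulRight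
            (EuclideanSpace.single i0 (1:ℝ))) p :=
    (hasFDerivAt_id p).sub ((hasFDerivAt_coord i0 p).smul_const _)
  have hGv2 := hDom.smul hP
  have hGv : HasFDerivAt (Gvec cθ tθ i0) (((1 / Real.cos (p i0 * cθ)^2) •
        (EuclideanSpace.proj i0 : EuclideanSpace ℝ (Fin n) →L[ℝ] ℝ)).smulRight
          (EuclideanSpace.single i0 (1:ℝ))
      + (omg tθ (rho2 p) • (ContinuousLinearMap.id ℝ (EuclideanSpace ℝ (Fin n))
          - (EuclideanSpace.proj i0 : EuclideanSpace ℝ (Fin n) →L[ℝ] ℝ).smulRight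
              (EuclideanSpace.single i0 (1:ℝ)))
        + (((Real.cosh (Real.sqrt (rho2 p) / tθ)^2 - Real.sinh (Real.sqrt (rho2 p) / tθ)^2)
          / (2 * (Real.sqrt (rho2 p) * Real.sqrt (rho2 p)) * Real.cosh (Real.sqrt (rho2 p) / tθ)^2)
        - tθ * Real.sinh (Real.sqrt (rho2 p) / tθ)
          / (2 * (Real.sqrt (rho2 p) * Real.sqrt (rho2 p) * Real.sqrt (rho2 p))
              * Real.cosh (Real.sqrt (rho2 p) / tθ))) • Lmap p).smulRight
            (p - p i0 • EuclideanSpace.single i0 (1:ℝ)))) p := by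
    unfold Gvec
    exact hGv1.add hGv2
  have hM := hψ.smul hGv
  have hfd := hFeq.fderiv_eq.trans hM.fderiv
  rw [ge_iff_le, hgradq p hc0 hrt0, norm_formula i0 h0 cθ tθ htθ p hrt0]
  -- abbreviations
  set r := Real.sqrt (rho2 p) with hrdef
  set sh := Real.sinh (r / tθ) with hshdef
  set ch := Real.cosh (r / tθ) with hchdef
  set a0 := aQ cθ (p i0) with ha0def
  set sec2 := 1 / Real.cos (p i0 * cθ)^2 with hsec2def
  set omt := omg tθ (rho2 p) with homtdef
  set btv := btf tθ (rho2 p) with hbtvdef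
  set omP := (ch^2 - sh^2)/(2*(r*r)*ch^2) - tθ*sh/(2*(r*r*r)*ch) with homPdef
  set btP := tθ*sh*(ch^2 - sh^2)/(r*ch^3) with hbtPdef
  set SQ := Real.sqrt (1 + (a0^2 + btv)) with hSQdef
  have hr : 0 < r := Real.sqrt_pos.2 hrt0
  have hsh : 0 < sh := by
    rw [hshdef]; exact Real.sinh_pos_iff.2 (by positivity)
  have hch : 0 < ch := by rw [hchdef]; exact Real.cosh_pos _
  have hrr : r * r = rho2 p := by rw [hrdef]; exact Real.mul_self_sqrt hrt0.le
  have hid : ch^2 - sh^2 = 1 := by rw [hshdef, hchdef]; exact Real.cosh_sq_sub_sinh_sq _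
  have hrel : tθ^2*cθ^2 = 1 - cθ^2 := by
    rw [htθdef, hcθdef, Real.tan_eq_sin_div_cos]
    have hc : Real.cos θ ≠ 0 := by rw [← hcθdef]; exact hcθ.ne'
    field_simp
    linear_combination Real.sin_sq_add_cos_sq θ
  have hs : 1/(Real.cos (p i0 * cθ))^2 = 1 + a0^2*cθ^2 := by
    rw [ha0def]
    unfold aQ
    rw [Real.tan_eq_sin_div_cos]
    field_simp
    linear_combination (-1 : ℝ) * Real.sin_sq_add_cos_sq (p i0 * cθ)
  -- componentwise evaluation of the divergence
  have hE0 : ⟪(fderiv ℝ (fun q => (Real.sqrt (1 + ‖gradient u q‖ ^ 2))⁻¹ • gradient u q) p)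
        (EuclideanSpace.single i0 1), EuclideanSpace.single i0 1⟫
      = SQ⁻¹ * sec2 + -(1/(2*SQ))/SQ^2 * (2*a0*sec2) * a0 := by
    rw [hfd, inner_single_one]
    simp only [ContinuousLinearMap.add_apply, ContinuousLinearMap.smul_apply,
      ContinuousLinearMap.smulRight_apply, ContinuousLinearMap.sub_apply,
      ContinuousLinearMap.id_apply, Lmap_single, proj_apply', Gvec,
      PiLp.add_apply, PiLp.smul_apply, PiLp.sub_apply, EuclideanSpace.single_apply,
      smul_eq_mul, h0, if_true]
    simp only [Function.comp_apply, if_pos rfl, ite_true]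
    rw [← ha0def, ← hbtvdef, ← hSQdef]
    ring
  have hE1 : ∀ j : Fin n, j ≠ i0 →
      ⟪(fderiv ℝ (fun q => (Real.sqrt (1 + ‖gradient u q‖ ^ 2))⁻¹ • gradient u q) p)
        (EuclideanSpace.single j 1), EuclideanSpace.single j 1⟫
      = SQ⁻¹ * omt + (SQ⁻¹ * (omP*2) + -(1/(2*SQ))/SQ^2 * (btP*2) * omt) * (p j * p j) := by
    intro j hj
    have hj0 : ¬((j:ℕ) = 0) := fun hc => hj (Fin.ext (by rw [hc, h0]))
    rw [hfd, inner_single_one]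
    simp only [ContinuousLinearMap.add_apply, ContinuousLinearMap.smul_apply,
      ContinuousLinearMap.smulRight_apply, ContinuousLinearMap.sub_apply,
      ContinuousLinearMap.id_apply, Lmap_single, proj_apply', Gvec,
      PiLp.add_apply, PiLp.smul_apply, PiLp.sub_apply, EuclideanSpace.single_apply,
      smul_eq_mul, hj0, if_false, hj, Ne.symm hj]
    simp only [Function.comp_apply, ite_true]
    rw [← ha0def, ← hbtvdef, ← hSQdef]
    ring
  have hcard : ((Finset.univ.erase i0).card : ℝ) = (n:ℝ) - 1 := by
    rw [Finset.card_erase_of_mem (Finset.mem_univ i0), Finset.card_univ, Fintype.card_fin]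
    have h1 : (1:ℕ) ≤ n := hn0
    push_cast [Nat.cast_sub h1]
    ring
  have hsum_sq : ∑ j ∈ Finset.univ.erase i0, p j * p j = rho2 p := by
    have h1 := Finset.add_sum_erase Finset.univ (fun j => p j * p j) (Finset.mem_univ i0)
    have h2 := rho2_eq i0 h0 p
    simp only at h1
    linarith [h1, h2]
  unfold eDiv
  rw [← Finset.add_sum_erase Finset.univ _ (Finset.mem_univ i0)]
  rw [hE0, Finset.sum_congr rfl (fun j hj => hE1 j (Finset.ne_of_mem_erase hj)),
    Finset.sum_add_distrib, Finset.sum_const, ← Finset.mul_sum, hsum_sq, nsmul_eq_mul, hcard]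
  refine le_trans (final_ineq n hn cθ tθ (Real.cos (p i0 * cθ)) a0 (rho2 p) r sh ch omt btv
    omP btP SQ htθ hc0 hr hsh hch hrr hid hrel hs ?_ ?_ homPdef hbtPdef hSQdef)
    (le_of_eq (by ring))
  · rw [homtdef, hshdef, hchdef, hrdef]; rfl
  · rw [hbtvdef, hshdef, hchdef, hrdef]; rfl
end

section
/- For θ ∈ (0, π/2), the function g(w) = cosh(√w / tanθ) defined for w > 0 is log-concave, i.e. w ↦ log(cosh(√w/tanθ)) is concave on (0,∞). -/
open Real Set

lemma tanh_hasDerivAt (s : ℝ) : HasDerivAt Real.tanh (1 / Real.cosh s ^ 2) s := by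
  have h := (Real.hasDerivAt_sinh s).div (Real.hasDerivAt_cosh s) (Real.cosh_pos s).ne'
  have : (fun x => Real.sinh x / Real.cosh x) = Real.tanh := by
    funext x; rw [Real.tanh_eq_sinh_div_cosh]
  rw [show (Real.sinh / Real.cosh) = Real.tanh from this] at h
  refine h.congr_deriv ?_
  have h1 : Real.cosh s ^ 2 - Real.sinh s ^ 2 = 1 := Real.cosh_sq_sub_sinh_sq s
  rw [div_left_inj' (pow_ne_zero 2 (Real.cosh_pos s).ne')]
  ring_nf
  nlinarith [Real.cosh_pos s]

lemma phi_antitone : AntitoneOn (fun s => Real.tanh s / s) (Set.Ioi (0 : ℝ)) := by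
  have : interior (Set.Ioi (0:ℝ)) = Set.Ioi 0 := interior_Ioi
  refine antitoneOn_of_deriv_nonpos (convex_Ioi 0) ?_ ?_ ?_
  · have htanh : Continuous Real.tanh := by
      have he : Real.tanh = fun x => Real.sinh x / Real.cosh x :=
        funext fun x => Real.tanh_eq_sinh_div_cosh x
      rw [he]; exact Real.continuous_sinh.div Real.continuous_cosh fun x => (Real.cosh_pos x).ne'
    exact htanh.continuousOn.div continuousOn_id (fun x hx => ne_of_gt hx)
  · rw [this]
    intro x hx
    exact ((tanh_hasDerivAt x).div (hasDerivAt_id x) (ne_of_gt hx)).differentiableAt.differentiableWithinAt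
  · rw [this]
    intro x hx
    have hx' : (0:ℝ) < x := hx
    have hder := ((tanh_hasDerivAt x).div (hasDerivAt_id x) (ne_of_gt hx')).deriv
    show deriv (Real.tanh / id) x ≤ 0
    rw [hder]
    simp only [id]
    have hc := Real.cosh_pos x
    have hs : x < Real.sinh x := Real.self_lt_sinh_iff.mpr hx'
    have h1 : (1:ℝ) ≤ Real.cosh x := Real.one_le_cosh x
    have hnum : 1 / Real.cosh x ^ 2 * x - Real.tanh x * 1 ≤ 0 := by
      rw [Real.tanh_eq_sinh_div_cosh]
      rw [div_mul_eq_mul_div, sub_nonpos, mul_one, div_le_div_iff₀ (by positivity) hc]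
      nlinarith [mul_nonneg (mul_pos (Real.sinh_pos_iff.mpr hx') hc).le (sub_nonneg.mpr h1),
        mul_pos (sub_pos.mpr hs) hc]
    have hx2 : (0:ℝ) < x ^ 2 := by positivity
    exact div_nonpos_of_nonpos_of_nonneg hnum hx2.le

/-- for θ ∈ (0, π/2), the function `g(w) = cosh(√w / tanθ)` is log-concave on
`(0,∞)`, i.e. `w ↦ log(cosh(√w/tanθ))` is concave there. -/
theorem logConcave_cosh_sqrt (θ : ℝ) (hθ : θ ∈ Set.Ioo 0 (Real.pi / 2)) :
    ConcaveOn ℝ (Set.Ioi (0 : ℝ))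
      (fun w : ℝ => Real.log (Real.cosh (Real.sqrt w / Real.tan θ))) := by
  set a := Real.tan θ with ha_def
  have ha : 0 < a := Real.tan_pos_of_pos_of_lt_pi_div_two hθ.1 hθ.2
  set f : ℝ → ℝ := fun w => Real.log (Real.cosh (Real.sqrt w / a)) with hf_def
  have hint : interior (Set.Ioi (0:ℝ)) = Set.Ioi 0 := interior_Ioi
  -- derivative formula
  have hD : ∀ w ∈ Set.Ioi (0:ℝ), HasDerivAt f
      (Real.tanh (Real.sqrt w / a) / (2 * a ^ 2 * (Real.sqrt w / a))) w := by
    intro w hw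
    have hw' : (0:ℝ) < w := hw
    have hsq : (0:ℝ) < Real.sqrt w := Real.sqrt_pos.mpr hw'
    have h1 : HasDerivAt (fun x => Real.sqrt x / a) (1 / (2 * Real.sqrt w) / a) w :=
      (Real.hasDerivAt_sqrt hw'.ne').div_const a
    have h2 : HasDerivAt (fun x => Real.cosh (Real.sqrt x / a))
        (Real.sinh (Real.sqrt w / a) * (1 / (2 * Real.sqrt w) / a)) w :=
      (Real.hasDerivAt_cosh _).comp w h1
    have h3 := h2.log (Real.cosh_pos _).ne'
    convert h3 using 1
    rw [Real.tanh_eq_sinh_div_cosh]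
    have hane := ha.ne'
    have hcne := (Real.cosh_pos (Real.sqrt w / a)).ne'
    generalize Real.sinh (Real.sqrt w / a) = S
    generalize Real.cosh (Real.sqrt w / a) = C at hcne
    generalize Real.sqrt w = W at hsq
    have hWne := hsq.ne'
    field_simp
  have hderiv : ∀ w ∈ Set.Ioi (0:ℝ), deriv f w =
      (fun s => Real.tanh s / s) (Real.sqrt w / a) / (2 * a ^ 2) := by
    intro w hw
    have hsq : (0:ℝ) < Real.sqrt w := Real.sqrt_pos.mpr hw
    rw [(hD w hw).deriv, div_div, mul_comm (Real.sqrt w / a) (2 * a ^ 2)]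
  refine AntitoneOn.concaveOn_of_deriv (convex_Ioi 0) ?_ ?_ ?_
  · -- continuity
    apply ContinuousOn.log
    · exact (Real.continuous_cosh.comp ((Real.continuous_sqrt).div_const a)).continuousOn
    · intro x _; exact (Real.cosh_pos _).ne'
  · rw [hint]
    intro w hw
    exact (hD w hw).differentiableAt.differentiableWithinAt
  · rw [hint]
    intro x hx y hy hxy
    rw [hderiv x hx, hderiv y hy]
    have hsx : (0:ℝ) < Real.sqrt x / a := div_pos (Real.sqrt_pos.mpr hx) ha
    have hsy : (0:ℝ) < Real.sqrt y / a := div_pos (Real.sqrt_pos.mpr hy) ha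
    have hle : Real.sqrt x / a ≤ Real.sqrt y / a := by
      gcongr
    have hφ := phi_antitone hsx hsy hle
    have hpos : (0:ℝ) < 2 * a ^ 2 := by positivity
    exact (div_le_div_iff_of_pos_right hpos).mpr hφ
end

section
/- Fix n ≥ 2 and θ ∈ (0, π/2). There exists ε₀ = ε₀(n,θ) > 0 such that for all ε ∈ (0, ε₀) and all R > 2(n-1)/ε, the following holds: if |z| ≥ R·cos(θ-ε)/sinθ and |y|² + z² ≤ R²/sin²θ (so that |y| ≤ R·sin(θ-ε)/sinθ), then ((|z| - (n-1))/√(|y|²+z²)) · tanh(√(|y|²+z²)/secθ) ≥ cosθ. -/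
set_option maxHeartbeats 1000000

lemma tanh_lower (x : ℝ) (hx : 0 < x) : 1 - 1/x^2 ≤ Real.tanh x := by
  set A := Real.exp x with hA
  set B := Real.exp (-x) with hB
  have ha : (0:ℝ) < A := Real.exp_pos x
  have hb : (0:ℝ) < B := Real.exp_pos _
  have hab : A * B = 1 := by rw [hA, hB, ← Real.exp_add]; simp
  have hx2 : (0:ℝ) < x^2 := by positivity
  have hsq : 2 * x ^ 2 ≤ A ^ 2 := by
    have h1 := Real.pow_div_factorial_le_exp (x := 2*x) (by positivity) 2
    have h2 : Real.exp (2*x) = A ^ 2 := by rw [hA, ← Real.exp_nat_mul]; norm_num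
    rw [h2] at h1
    norm_num [Nat.factorial] at h1
    nlinarith [h1]
  have htanh : Real.tanh x = (A - B)/(A + B) := by
    rw [Real.tanh_eq_sinh_div_cosh, Real.sinh_eq, Real.cosh_eq]
    rw [← hA, ← hB]
    field_simp
  rw [htanh, le_div_iff₀ (by positivity)]
  have hkey : 2*B*x^2 ≤ A + B := by nlinarith [hsq, hab, ha, hb, hx2, mul_pos ha hx2]
  have h1 : 2*B ≤ (A+B)/x^2 := by rw [le_div_iff₀ hx2]; linarith
  have h2 : (1 - 1/x^2)*(A+B) = (A+B) - (A+B)/x^2 := by ring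
  linarith

/-- the quantitative supersolution condition for the rotated Angenent oval
barrier. For every n ≥ 2, θ ∈ (0,π/2) there is ε₀ > 0 such that for ε ∈ (0,ε₀) and
R > 2(n-1)/ε: whenever |z| ≥ R·cos(θ-ε)/sinθ and y² + z² ≤ R²/sin²θ (so that
|y| ≤ R·sin(θ-ε)/sinθ), one has
`((|z| - (n-1))/√(y²+z²))·tanh(√(y²+z²)/secθ) ≥ cosθ`  (note `1/secθ = cosθ`). -/
theorem angenent_oval_supersolution (n : ℕ) (hn : 2 ≤ n) (θ : ℝ)
    (hθ : θ ∈ Set.Ioo 0 (Real.pi / 2)) :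
    ∃ ε₀ > (0 : ℝ), ∀ ε ∈ Set.Ioo 0 ε₀, ∀ R : ℝ, 2 * ((n : ℝ) - 1) / ε < R →
      ∀ y z : ℝ, R * Real.cos (θ - ε) / Real.sin θ ≤ |z| →
        y ^ 2 + z ^ 2 ≤ R ^ 2 / Real.sin θ ^ 2 →
        Real.cos θ ≤
          (|z| - ((n : ℝ) - 1)) / Real.sqrt (y ^ 2 + z ^ 2)
            * Real.tanh (Real.sqrt (y ^ 2 + z ^ 2) * Real.cos θ) := by
  obtain ⟨hθ0, hθ2⟩ := hθ
  have hπ := Real.pi_pos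
  have hs : 0 < Real.sin θ := Real.sin_pos_of_pos_of_lt_pi hθ0 (by linarith)
  have hc : 0 < Real.cos θ := Real.cos_pos_of_mem_Ioo ⟨by linarith, hθ2⟩
  have hs1 : Real.sin θ ≤ 1 := Real.sin_le_one θ
  have hc1 : Real.cos θ ≤ 1 := Real.cos_le_one θ
  set s := Real.sin θ with hs_def
  set c := Real.cos θ with hc_def
  refine ⟨min (min 1 (s/4)) (min (2*c/s) (c^4/(4*s))), by positivity, ?_⟩
  rintro ε ⟨hε0, hεlt⟩ R hR y z hz hyz
  have hε1 : ε ≤ 1 := le_trans hεlt.le (le_trans (min_le_left _ _) (min_le_left _ _))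
  have hε2 : ε ≤ s/4 := le_trans hεlt.le (le_trans (min_le_left _ _) (min_le_right _ _))
  have hε3 : ε ≤ 2*c/s := le_trans hεlt.le (le_trans (min_le_right _ _) (min_le_left _ _))
  have hε4 : ε ≤ c^4/(4*s) := le_trans hεlt.le (le_trans (min_le_right _ _) (min_le_right _ _))
  have hεs2c : ε*s ≤ 2*c := by
    have := (le_div_iff₀ hs).mp hε3; linarith
  have hεs4 : ε*(4*s) ≤ c^4 := (le_div_iff₀ (by positivity)).mp hε4
  have hn1 : (1:ℝ) ≤ (n:ℝ) - 1 := by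
    have : (2:ℝ) ≤ (n:ℝ) := by exact_mod_cast hn
    linarith
  have hR0 : 0 < R := lt_trans (by positivity) hR
  have hRε : 2*((n:ℝ)-1) < R*ε := by
    rw [div_lt_iff₀ hε0] at hR; linarith
  -- bound on cos (θ - ε)
  have hsin_ε : (3/4)*ε ≤ Real.sin ε := by
    have h := Real.sin_gt_sub_cube hε0
    nlinarith [sq_nonneg ε, hε0.le]
  have hcos_ε : 1 - ε^2/2 ≤ Real.cos ε := Real.one_sub_sq_div_two_le_cos
  have hcosθε : c + (3/4)*ε*s - ε^2/2 ≤ Real.cos (θ - ε) := by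
    rw [Real.cos_sub, ← hs_def, ← hc_def]
    nlinarith [mul_le_mul_of_nonneg_left hcos_ε hc.le,
      mul_le_mul_of_nonneg_left hsin_ε hs.le, sq_nonneg ε, hc1]
  have hC : c + ε*s/8 ≤ Real.cos (θ - ε) - ε*s/2 := by
    nlinarith [hcosθε, mul_le_mul_of_nonneg_left hε2 hε0.le, hs, hε0]
  have hcge : c ≤ Real.cos (θ - ε) := by linarith [hC, mul_pos hε0 hs]
  -- basic facts about r
  have hzs : R * Real.cos (θ - ε) ≤ |z| * s := by
    rw [div_le_iff₀ hs] at hz; linarith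
  have hzs' : R * c ≤ |z| * s := le_trans (by nlinarith [hcge, hR0]) hzs
  have hzpos : 0 < |z| := by nlinarith [mul_pos hR0 hc, hzs', hs, abs_nonneg z]
  have hzne : z ≠ 0 := by
    intro h; rw [h, abs_zero] at hzpos; exact lt_irrefl _ hzpos
  have hsum_pos : 0 < y^2 + z^2 := by positivity
  set r := Real.sqrt (y^2 + z^2) with hr_def
  have hr_pos : 0 < r := Real.sqrt_pos.mpr hsum_pos
  have hzr : |z| ≤ r := by
    rw [hr_def, show |z| = Real.sqrt (z^2) from (Real.sqrt_sq_eq_abs z).symm]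
    exact Real.sqrt_le_sqrt (by nlinarith [sq_nonneg y])
  have hrle : r ≤ R/s := by
    rw [hr_def, show R/s = Real.sqrt ((R/s)^2) from (Real.sqrt_sq (by positivity)).symm]
    exact Real.sqrt_le_sqrt (by rw [div_pow]; exact hyz)
  -- |z| ≥ n - 1
  have hzn : (n:ℝ)-1 ≤ |z| := by
    nlinarith [mul_le_mul_of_nonneg_right hzs' hε0.le,
      mul_lt_mul_of_pos_right hRε hc,
      mul_le_mul_of_nonneg_left hεs2c (by linarith : (0:ℝ) ≤ (n:ℝ)-1),
      mul_pos hs hε0]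
  -- lower bound for the ratio
  have hA : c + ε*s/8 ≤ (|z| - ((n:ℝ)-1))/r := by
    have h1 : (|z| - ((n:ℝ)-1))/(R/s) ≤ (|z| - ((n:ℝ)-1))/r := by
      gcongr
    have h2 : (|z| - ((n:ℝ)-1))/(R/s) = (|z| - ((n:ℝ)-1))*s/R := by
      rw [div_div_eq_mul_div]
    have h3 : c + ε*s/8 ≤ (|z| - ((n:ℝ)-1))*s/R := by
      rw [le_div_iff₀ hR0]
      nlinarith [hzs, mul_lt_mul_of_pos_right hRε hs,
        mul_le_mul_of_nonneg_right hC hR0.le]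
    calc c + ε*s/8 ≤ (|z| - ((n:ℝ)-1))*s/R := h3
      _ = (|z| - ((n:ℝ)-1))/(R/s) := h2.symm
      _ ≤ (|z| - ((n:ℝ)-1))/r := h1
  -- lower bound for tanh
  have hT' : 2*c^2 ≤ r*c*(ε*s) := by
    nlinarith [mul_le_mul_of_nonneg_right hzs (mul_pos hε0 hc).le,
      mul_le_mul_of_nonneg_right hcge (by positivity : (0:ℝ) ≤ R*ε*c),
      mul_lt_mul_of_pos_right hRε (mul_pos hc hc),
      mul_le_mul_of_nonneg_right hzr (by positivity : (0:ℝ) ≤ s*(ε*c)),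
      mul_le_mul_of_nonneg_right hn1 (by positivity : (0:ℝ) ≤ c*c)]
  have h4 := tanh_lower (r*c) (by positivity)
  have h5 : 1/(r*c)^2 ≤ (ε*s)^2/(4*c^4) := by
    rw [div_le_div_iff₀ (by positivity) (by positivity)]
    have hsq2 : (2*c^2)^2 ≤ (r*c*(ε*s))^2 := by
      apply pow_le_pow_left₀ (by positivity) hT'
    calc 1*(4*c^4) = (2*c^2)^2 := by ring
      _ ≤ (r*c*(ε*s))^2 := hsq2
      _ = (ε*s)^2*(r*c)^2 := by ring
  have hδ : (ε*s)^2/(4*c^4) ≤ ε*s/16 := by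
    rw [div_le_div_iff₀ (by positivity) (by norm_num)]
    have h := mul_le_mul_of_nonneg_right hεs4 (mul_pos hε0 hs).le
    calc (ε*s)^2*16 = 4*(ε*(4*s)*(ε*s)) := by ring
      _ ≤ 4*(c^4*(ε*s)) := by linarith
      _ = ε*s*(4*c^4) := by ring
  have htanh : 1 - ε*s/16 ≤ Real.tanh (r*c) := by linarith
  have hεs1 : ε*s ≤ 1 := by
    calc ε*s ≤ 1*1 := mul_le_mul hε1 hs1 hs.le (by norm_num)
      _ = 1 := by norm_num
  have hmul : (c + ε*s/8)*(1 - ε*s/16) ≤ ((|z| - ((n:ℝ)-1))/r) * Real.tanh (r*c) := by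
    apply mul_le_mul hA htanh (by linarith) (le_trans (by positivity) hA)
  have hfin : c ≤ (c + ε*s/8) * (1 - ε*s/16) := by
    have t1 : c*(ε*s) ≤ 1*(ε*s) := mul_le_mul_of_nonneg_right hc1 (mul_pos hε0 hs).le
    have t2 : (ε*s)*(ε*s) ≤ 1*(ε*s) := mul_le_mul_of_nonneg_right hεs1 (mul_pos hε0 hs).le
    have expand : (c + ε*s/8) * (1 - ε*s/16)
        = c + (ε*s)/8 - (c*(ε*s))/16 - ((ε*s)*(ε*s))/128 := by ring
    rw [expand]
    linarith [t1, t2, (mul_pos hε0 hs).le]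
  calc c ≤ (c + ε*s/8) * (1 - ε*s/16) := hfin
    _ ≤ ((|z| - ((n:ℝ)-1))/r) * Real.tanh (r*c) := hmul
end
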